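/- Unbiasedness of the label-corrected loss (Theorem 1, general measure-theoretic form). Let (Ω, F, μ) be a probability space, let 𝒳 be a measurable space, let X : Ω → 𝒳 be measurable (the feature map), let E : Ω → ℝ be measurable (the elapsed time), and let V, C : Ω → ℝ be measurable functions taking values in {0,1} with V ≤ C pointwise. Let m be the sub-σ-algebra of F generated by the pair map ω ↦ (X ω, E ω). Suppose W : Ω → ℝ is m-measurable, takes values in [0,1], and satisfies W · μ[(1 - V) | m] = μ[C · (1 - V) | m] almost everywhere with respect to μ (i.e., W is an ideal label-correction model: W = P(C = 1 | X, E, V = 0) on {V = 0}). Then for all bounded measurable functions a, b : 𝒳 → ℝ, ∫ (V · a(X) + W · (1 - V) · a(X) + (1 - W) · (1 - V) · b(X)) dμ = ∫ (C · a(X) + (1 - C) · b(X)) dμ. -/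

import Mathlib

open MeasureTheory

private lemma bdd_int {Ω : Type*} {mΩ : MeasurableSpace Ω} {μ : Measure Ω}
    [IsProbabilityMeasure μ] {f : Ω → ℝ} (hf : AEStronglyMeasurable f μ)
    (M : ℝ) (h : ∀ ω, |f ω| ≤ M) : Integrable f μ :=
  (integrable_const M).mono' hf (Filter.Eventually.of_forall h)

private lemma mul_condexp_int {Ω : Type*} {m0 : MeasurableSpace Ω} {μ : Measure Ω}
    [IsProbabilityMeasure μ] {m : MeasurableSpace Ω} (hle : m ≤ m0)
    {φ h : Ω → ℝ} (hφ : StronglyMeasurable[m] φ)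
    (hint : Integrable (φ * h) μ) (hh : Integrable h μ) :
    ∫ ω, φ ω * h ω ∂μ = ∫ ω, φ ω * (μ[h|m]) ω ∂μ := by
  have h1 := condExp_mul_of_stronglyMeasurable_left hφ hint hh
  calc ∫ ω, φ ω * h ω ∂μ = ∫ ω, (φ * h) ω ∂μ := rfl
    _ = ∫ ω, (μ[φ * h|m]) ω ∂μ := (integral_condExp hle).symm
    _ = ∫ ω, (φ * μ[h|m]) ω ∂μ := integral_congr_ae h1
    _ = _ := rfl

/-- Unbiasedness of the label-corrected loss (Theorem 1, general
measure-theoretic form). -/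
theorem unbiased_label_corrected_loss
    {Ω : Type*} [MeasurableSpace Ω] {𝒳 : Type*} [MeasurableSpace 𝒳]
    (μ : Measure Ω) [IsProbabilityMeasure μ]
    (X : Ω → 𝒳) (E : Ω → ℝ) (V C W : Ω → ℝ)
    (hX : Measurable X) (hE : Measurable E)
    (hV : Measurable V) (hC : Measurable C)
    (hV01 : ∀ ω, V ω = 0 ∨ V ω = 1)
    (hC01 : ∀ ω, C ω = 0 ∨ C ω = 1)
    (hVC : ∀ ω, V ω ≤ C ω)
    (m : MeasurableSpace Ω)
    (hm : m = MeasurableSpace.comap (fun ω => (X ω, E ω)) inferInstance)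
    (hWm : Measurable[m] W)
    (hW01 : ∀ ω, W ω ∈ Set.Icc (0 : ℝ) 1)
    (hWideal : W * μ[(fun ω => 1 - V ω) | m] =ᵐ[μ] μ[(fun ω => C ω * (1 - V ω)) | m]) :
    ∀ a b : 𝒳 → ℝ, Measurable a → Measurable b →
      (∃ Ma, ∀ x, |a x| ≤ Ma) → (∃ Mb, ∀ x, |b x| ≤ Mb) →
      ∫ ω, (V ω * a (X ω) + W ω * (1 - V ω) * a (X ω)
            + (1 - W ω) * (1 - V ω) * b (X ω)) ∂μ
        = ∫ ω, (C ω * a (X ω) + (1 - C ω) * b (X ω)) ∂μ := by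
  rintro a b ha hb ⟨Ma, hMa⟩ ⟨Mb, hMb⟩
  -- m ≤ ambient σ-algebra
  have hle := le_of_eq_of_le hm (hX.prodMk hE).comap_le
  -- X is m-measurable
  have hXm : Measurable[m] X := by
    have hpair : Measurable[m] (fun ω => (X ω, E ω)) := by
      rw [hm]; exact measurable_iff_comap_le.mpr le_rfl
    exact measurable_fst.comp hpair
  -- g = b∘X - a∘X is m-measurable and bounded
  set g : Ω → ℝ := fun ω => b (X ω) - a (X ω) with hg
  have hgm : StronglyMeasurable[m] g :=
    ((hb.comp hXm).sub (ha.comp hXm)).stronglyMeasurable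
  have hgbd : ∀ ω, |g ω| ≤ Mb + Ma := fun ω =>
    (abs_sub _ _).trans (add_le_add (hMb _) (hMa _))
  have hVbd : ∀ ω, |1 - V ω| ≤ 1 := by
    intro ω; rcases hV01 ω with h | h <;> simp [h]
  have hCbd : ∀ ω, |C ω| ≤ 1 := by
    intro ω; rcases hC01 ω with h | h <;> simp [h]
  have hWbd : ∀ ω, |W ω| ≤ 1 := fun ω =>
    abs_le.mpr ⟨le_trans (by norm_num) (hW01 ω).1, (hW01 ω).2⟩
  have hWm' := (hWm.mono hle le_rfl).aestronglyMeasurable (μ := μ)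
  -- integrability facts
  have haX := (ha.comp hX).aestronglyMeasurable (μ := μ)
  have hbX := (hb.comp hX).aestronglyMeasurable (μ := μ)
  have hintCV : Integrable (fun ω => C ω * (1 - V ω)) μ :=
    bdd_int (hC.aestronglyMeasurable.mul (aestronglyMeasurable_const.sub hV.aestronglyMeasurable)) 1
      (fun ω => by
        rw [abs_mul]
        exact mul_le_one₀ (hCbd ω) (abs_nonneg _) (hVbd ω))
  have hintV : Integrable (fun ω => 1 - V ω) μ :=
    bdd_int (aestronglyMeasurable_const.sub hV.aestronglyMeasurable) 1 hVbd
  have hint1 : Integrable (g * fun ω => C ω * (1 - V ω)) μ :=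
    bdd_int ((hbX.sub haX).mul (hC.aestronglyMeasurable.mul
        (aestronglyMeasurable_const.sub hV.aestronglyMeasurable)))
      ((Mb + Ma) * 1)
      (fun ω => by
        rw [Pi.mul_apply, abs_mul]
        exact mul_le_mul (hgbd ω) (by
          rw [abs_mul]
          exact mul_le_one₀ (hCbd ω) (abs_nonneg _) (hVbd ω)) (abs_nonneg _)
          (le_trans (abs_nonneg _) (hgbd ω)))
  have hint2 : Integrable ((g * W) * fun ω => 1 - V ω) μ :=
    bdd_int (((hbX.sub haX).mul hWm').mul
        (aestronglyMeasurable_const.sub hV.aestronglyMeasurable))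
      ((Mb + Ma) * 1 * 1)
      (fun ω => by
        simp only [Pi.mul_apply, abs_mul]
        exact mul_le_mul (mul_le_mul (hgbd ω) (hWbd ω) (abs_nonneg _)
          (le_trans (abs_nonneg _) (hgbd ω))) (hVbd ω) (abs_nonneg _)
          (by have := le_trans (abs_nonneg (g ω)) (hgbd ω); linarith))
  have hgWm : StronglyMeasurable[m] (g * W) :=
    hgm.mul hWm.stronglyMeasurable
  -- key equality: ∫ C(1-V)·g = ∫ W(1-V)·g
  have key : ∫ ω, g ω * (C ω * (1 - V ω)) ∂μ = ∫ ω, (g ω * W ω) * (1 - V ω) ∂μ := by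
    have s1 : ∫ ω, g ω * (C ω * (1 - V ω)) ∂μ
        = ∫ ω, g ω * (μ[(fun ω => C ω * (1 - V ω))|m]) ω ∂μ :=
      mul_condexp_int hle hgm hint1 hintCV
    have s3 : ∫ ω, (g ω * W ω) * (1 - V ω) ∂μ
        = ∫ ω, (g ω * W ω) * (μ[(fun ω => 1 - V ω)|m]) ω ∂μ :=
      mul_condexp_int hle hgWm hint2 hintV
    have s2 : ∫ ω, g ω * (μ[(fun ω => C ω * (1 - V ω))|m]) ω ∂μ
        = ∫ ω, (g ω * W ω) * (μ[(fun ω => 1 - V ω)|m]) ω ∂μ := by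
      refine integral_congr_ae ?_
      filter_upwards [hWideal] with ω hω
      have : W ω * (μ[(fun ω => 1 - V ω)|m]) ω = (μ[(fun ω => C ω * (1 - V ω))|m]) ω := hω
      rw [mul_assoc, this]
    rw [s1, s2, s3]
  -- pointwise decomposition
  have hpt : ∀ ω, V ω * a (X ω) + W ω * (1 - V ω) * a (X ω)
      + (1 - W ω) * (1 - V ω) * b (X ω)
      = (C ω * a (X ω) + (1 - C ω) * b (X ω))
        + (g ω * (C ω * (1 - V ω)) - (g ω * W ω) * (1 - V ω)) := by
    intro ω
    have hcv : C ω * V ω = V ω := by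
      rcases hV01 ω with h | h
      · simp [h]
      · rcases hC01 ω with h' | h'
        · exfalso; have := hVC ω; rw [h, h'] at this; linarith
        · simp [h, h']
    simp only [hg]
    linear_combination (b (X ω) - a (X ω)) * hcv
  -- integrability of pieces
  have hintOracle : Integrable (fun ω => C ω * a (X ω) + (1 - C ω) * b (X ω)) μ :=
    bdd_int ((hC.aestronglyMeasurable.mul haX).add
        ((aestronglyMeasurable_const.sub hC.aestronglyMeasurable).mul hbX))
      (1 * Ma + 2 * Mb)
      (fun ω => by
        have h1 : |C ω * a (X ω)| ≤ 1 * Ma := by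
          rw [abs_mul]
          exact mul_le_mul (hCbd ω) (hMa _) (abs_nonneg _) zero_le_one
        have h2 : |(1 - C ω) * b (X ω)| ≤ 2 * Mb := by
          rw [abs_mul]
          have : |1 - C ω| ≤ 2 := by rcases hC01 ω with h | h <;> simp [h] <;> norm_num
          exact mul_le_mul this (hMb _) (abs_nonneg _) (by norm_num)
        exact (abs_add_le _ _).trans (add_le_add h1 h2))
  have hint1' : Integrable (fun ω => g ω * (C ω * (1 - V ω))) μ := hint1
  have hint2' : Integrable (fun ω => (g ω * W ω) * (1 - V ω)) μ := hint2
  have hintD : Integrable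
      (fun ω => g ω * (C ω * (1 - V ω)) - (g ω * W ω) * (1 - V ω)) μ :=
    hint1'.sub hint2'
  calc ∫ ω, (V ω * a (X ω) + W ω * (1 - V ω) * a (X ω)
            + (1 - W ω) * (1 - V ω) * b (X ω)) ∂μ
      = ∫ ω, ((C ω * a (X ω) + (1 - C ω) * b (X ω))
        + (g ω * (C ω * (1 - V ω)) - (g ω * W ω) * (1 - V ω))) ∂μ := by
        exact integral_congr_ae (Filter.Eventually.of_forall hpt)
    _ = (∫ ω, (C ω * a (X ω) + (1 - C ω) * b (X ω)) ∂μ)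
        + ∫ ω, (g ω * (C ω * (1 - V ω)) - (g ω * W ω) * (1 - V ω)) ∂μ :=
        integral_add hintOracle hintD
    _ = ∫ ω, (C ω * a (X ω) + (1 - C ω) * b (X ω)) ∂μ := by
        rw [integral_sub hint1' hint2', key]; ring
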